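/- Let R = F_2[Y]/(Y^3 − 1) and let ℓ ≥ 1. Then every Hermitian self-dual linear code C ⊆ R^{2ℓ+2} over R is obtained, up to a permutation of the 2ℓ+2 coordinates, by the building-up construction: there exist a permutation σ of the coordinates, a Hermitian self-dual linear code C_0 ⊆ R^{2ℓ} generated as an R-module by vectors r_1, …, r_k, an element c ∈ R with c·conj(c) = −1 (= 1), and a vector x ∈ R^{2ℓ} with ⟨x,x⟩ = −1 (= 1), such that the code obtained from C by applying σ to coordinates equals the R-submodule of R^{2ℓ+2} generated by (1, 0, x) and the vectors (y_i, c·y_i, r_i) for 1 ≤ i ≤ k, where y_i = −⟨r_i, x⟩. -/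

import Mathlib

open Polynomial

noncomputable section

/-- The ring `R = F_q[Y]/(Y^m − 1)`. -/
abbrev Rq (F : Type) [Field F] (m : ℕ) := AdjoinRoot ((X : F[X]) ^ m - 1)

lemma root_pow_eq_one (F : Type) [Field F] (m : ℕ) :
    (AdjoinRoot.root ((X : F[X]) ^ m - 1)) ^ m = 1 := by
  have h : (aeval (AdjoinRoot.root ((X : F[X]) ^ m - 1)) ((X : F[X]) ^ m - 1)) = 0 := by
    rw [AdjoinRoot.aeval_eq, AdjoinRoot.mk_self]
  simp only [map_sub, map_pow, aeval_X, map_one, sub_eq_zero] at h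
  exact h

/-- Conjugation on `R`: the `F`-algebra map determined by `Y ↦ Y^{m−1} (= Y⁻¹)`. -/
noncomputable def conjR (F : Type) [Field F] (m : ℕ) : Rq F m →ₐ[F] Rq F m :=
  AdjoinRoot.liftAlgHom _ (Algebra.ofId F (Rq F m)) ((AdjoinRoot.root ((X : F[X]) ^ m - 1)) ^ (m - 1)) (by
    show aeval _ _ = 0
    simp only [map_sub, map_pow, aeval_X, map_one, sub_eq_zero, ← pow_mul]
    rw [mul_comm, pow_mul, root_pow_eq_one, one_pow])

/-- The Hermitian inner product `⟨x,y⟩ = Σ_j x_j ⬝ conj(y_j)` on `R^n`. -/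
def herm (F : Type) [Field F] (m : ℕ) {n : ℕ} (x y : Fin n → Rq F m) : Rq F m :=
  ∑ j, x j * conjR F m (y j)

/-- A linear code `C ⊆ R^n` is Hermitian self-dual if `C = C^⊥`, i.e. membership in `C`
coincides with orthogonality to all of `C`. -/
def IsHermSelfDual (F : Type) [Field F] (m : ℕ) {n : ℕ}
    (C : Submodule (Rq F m) (Fin n → Rq F m)) : Prop :=
  ∀ y, y ∈ C ↔ ∀ x ∈ C, herm F m x y = 0

namespace SD
abbrev R := Rq (ZMod 2) 3
def y : R := AdjoinRoot.root _
lemma h3 : y ^ 3 = 1 := root_pow_eq_one (ZMod 2) 3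
lemma conj_y : conjR (ZMod 2) 3 y = y ^ 2 := by
  unfold conjR y
  exact AdjoinRoot.liftAlgHom_root _ _ _ _
lemma two0 : (1 + 1 : R) = 0 := by
  have h2 : (1+1 : ZMod 2) = 0 := by decide
  calc (1+1:R) = algebraMap (ZMod 2) R (1+1) := by push_cast; ring
  _ = 0 := by rw [h2, map_zero]
lemma c01 (c : ZMod 2) : c = 0 ∨ c = 1 := by revert c; decide
abbrev am (c : ZMod 2) : R := algebraMap (ZMod 2) R c
lemma rep (a : R) : ∃ c0 c1 c2 : ZMod 2, a = am c0 + am c1 * y + am c2 * y^2 := by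
  induction a using AdjoinRoot.induction_on with
  | ih p =>
    induction p using Polynomial.induction_on with
    | C c => exact ⟨c, 0, 0, by simp [am, AdjoinRoot.mk_C]⟩
    | add p q hp hq =>
      obtain ⟨a0,a1,a2,ha⟩ := hp; obtain ⟨b0,b1,b2,hb⟩ := hq
      exact ⟨a0+b0, a1+b1, a2+b2, by rw [map_add, ha, hb]; simp only [am, map_add]; ring⟩
    | monomial n c hp =>
      obtain ⟨a0,a1,a2,ha⟩ := hp
      refine ⟨a2, a0, a1, ?_⟩
      have : (AdjoinRoot.mk ((X : (ZMod 2)[X]) ^ 3 - 1)) (C c * X ^ (n+1))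
          = (AdjoinRoot.mk ((X : (ZMod 2)[X]) ^ 3 - 1)) (C c * X ^ n) * y := by
        have hp : (C c * X^(n+1) : (ZMod 2)[X]) = (C c * X^n) * X := by ring
        rw [hp, map_mul]; rfl
      linear_combination this + y * ha + (am a2) * h3
end SD
namespace SD
def t1 : R := 1 + y + y^2
def t2 : R := y + y^2
lemma t1_sq : t1 * t1 = t1 := by unfold t1; linear_combination (2 + y) * h3 + (1 + y + y^2) * two0
lemma t2_sq : t2 * t2 = t2 := by unfold t2; linear_combination (2 + y) * h3 + (1) * two0
lemma tsum : t1 + t2 = 1 := by unfold t1 t2; linear_combination (y + y^2) * two0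
lemma tmul : t1 * t2 = 0 := by unfold t1 t2; linear_combination (2 + y) * h3 + (1 + y + y^2) * two0
lemma y4 : y^4 = y := by linear_combination (y) * h3
lemma conj_t1 : conjR (ZMod 2) 3 t1 = t1 := by
  unfold t1
  rw [map_add, map_add, map_one, map_pow, conj_y]
  linear_combination y * h3
lemma conj_t2 : conjR (ZMod 2) 3 t2 = t2 := by
  unfold t2
  rw [map_add, map_pow, conj_y]
  linear_combination y * h3
lemma hmon : ((X : (ZMod 2)[X]) ^ 3 - 1).Monic := by
  have := Polynomial.monic_X_pow_sub_C (1 : ZMod 2) (n := 3) (by norm_num)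
  simpa using this
lemma mk_ne (p : (ZMod 2)[X]) (hdeg : p.degree < 3) (hp : p ≠ 0) :
    AdjoinRoot.mk ((X : (ZMod 2)[X]) ^ 3 - 1) p ≠ 0 := by
  intro h
  apply hp
  have h2 := congrArg (AdjoinRoot.modByMonicHom hmon) h
  rw [map_zero] at h2
  rw [AdjoinRoot.modByMonicHom_mk] at h2
  have e1 : ((X : (ZMod 2)[X])^3 - 1) = X^3 - C 1 := by rw [Polynomial.C_1]
  rwa [(Polynomial.modByMonic_eq_self_iff hmon).2 (by
    rw [e1, Polynomial.degree_X_pow_sub_C (by norm_num) (1 : ZMod 2)]; exact_mod_cast hdeg)] at h2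
lemma t1_ne : t1 ≠ 0 := by
  have : t1 = AdjoinRoot.mk ((X : (ZMod 2)[X]) ^ 3 - 1) (1 + X + X^2) := by
    unfold t1; rw [map_add, map_add, map_one, map_pow]; rfl
  rw [this]
  apply mk_ne
  · exact lt_of_le_of_lt (by compute_degree : (1 + X + X^2 : (ZMod 2)[X]).degree ≤ 2) (by decide)
  · intro h
    have := congrArg (fun p => Polynomial.coeff p 1) h
    simp [Polynomial.coeff_one] at this
lemma t2_ne : t2 ≠ 0 := by
  have : t2 = AdjoinRoot.mk ((X : (ZMod 2)[X]) ^ 3 - 1) (X + X^2) := by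
    unfold t2; rw [map_add, map_pow]; rfl
  rw [this]
  apply mk_ne
  · exact lt_of_le_of_lt (by compute_degree : (X + X^2 : (ZMod 2)[X]).degree ≤ 2) (by decide)
  · intro h
    have := congrArg (fun p => Polynomial.coeff p 1) h
    simp [Polynomial.coeff_one] at this
end SD

namespace SD
lemma L4 (a : R) : t1 * a = 0 ∨ t1 * a = t1 := by
  obtain ⟨c0, c1, c2, rfl⟩ := rep a
  rcases c01 c0 with rfl|rfl <;> rcases c01 c1 with rfl|rfl <;> rcases c01 c2 with rfl|rfl <;>
    simp only [map_zero, map_one]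
  · left; unfold t1; linear_combination (0:R) * h3 + (0:R) * two0
  · right; unfold t1; linear_combination (1 + y) * h3 + (0:R) * two0
  · right; unfold t1; linear_combination (1) * h3 + (0:R) * two0
  · left; unfold t1; linear_combination (2 + y) * h3 + (1 + y + y^2) * two0
  · right; unfold t1; linear_combination (0:R) * h3 + (0:R) * two0
  · left; unfold t1; linear_combination (1 + y) * h3 + (1 + y + y^2) * two0
  · left; unfold t1; linear_combination (1) * h3 + (1 + y + y^2) * two0
  · right; unfold t1; linear_combination (2 + y) * h3 + (1 + y + y^2) * two0
lemma L5 (a : R) : t2 * a = 0 ∨ (t2 * a)^3 = t2 := by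
  obtain ⟨c0, c1, c2, rfl⟩ := rep a
  rcases c01 c0 with rfl|rfl <;> rcases c01 c1 with rfl|rfl <;> rcases c01 c2 with rfl|rfl <;>
    simp only [map_zero, map_one]
  · left; unfold t2; linear_combination (0:R) * h3 + (0:R) * two0
  · right; unfold t2; linear_combination (2 + 3*y + 3*y^2 + 2*y^3 + 3*y^4 + 3*y^5 + 2*y^6 + 3*y^7 + 3*y^8 + y^9) * h3 + (1 + y + y^2) * two0
  · right; unfold t2; linear_combination (2 + 3*y + 3*y^2 + 2*y^3 + 3*y^4 + 3*y^5 + y^6) * h3 + (1 + y + y^2) * two0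
  · right; unfold t2; linear_combination (22 + 21*y + 21*y^2 + 22*y^3 + 21*y^4 + 21*y^5 + 21*y^6 + 15*y^7 + 6*y^8 + y^9) * h3 + (11 + 10*y + 10*y^2) * two0
  · right; unfold t2; linear_combination (2 + 3*y + 3*y^2 + y^3) * h3 + (1 + y + y^2) * two0
  · right; unfold t2; linear_combination (22 + 21*y + 21*y^2 + 21*y^3 + 18*y^4 + 15*y^5 + 11*y^6 + 6*y^7 + 3*y^8 + y^9) * h3 + (11 + 10*y + 10*y^2) * two0
  · right; unfold t2; linear_combination (22 + 21*y + 21*y^2 + 21*y^3 + 15*y^4 + 6*y^5 + y^6) * h3 + (11 + 10*y + 10*y^2) * two0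
  · left; unfold t2; linear_combination (2 + y) * h3 + (1 + y + y^2) * two0
end SD

namespace SD
abbrev conj : R →ₐ[ZMod 2] R := conjR (ZMod 2) 3
lemma conj_conj (a : R) : conj (conj a) = a := by
  have h : (conjR (ZMod 2) 3).comp (conjR (ZMod 2) 3) = AlgHom.id (ZMod 2) R := by
    apply AdjoinRoot.algHom_ext
    show conjR (ZMod 2) 3 (conjR (ZMod 2) 3 (y)) = _
    rw [conj_y, map_pow, conj_y, ← pow_mul]
    show y ^ (2*2) = y
    linear_combination y * h3
  calc conj (conj a) = ((conjR (ZMod 2) 3).comp (conjR (ZMod 2) 3)) a := rfl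
  _ = a := by rw [h]; rfl
lemma conj_inj : Function.Injective (conj : R → R) :=
  Function.LeftInverse.injective conj_conj
lemma char2 (a : R) : a + a = 0 := by linear_combination a * two0
lemma neg_eq (a : R) : -a = a := by linear_combination (-a) * two0
lemma dom1 {a b : R} (ha : t1 * a ≠ 0) (hb : t1 * b ≠ 0) : t1 * (a * b) ≠ 0 := by
  rcases L4 a with h|h; · exact absurd h ha
  rcases L4 b with h'|h'; · exact absurd h' hb
  intro hab
  apply t1_ne
  calc t1 = t1 * t1 := t1_sq.symm
  _ = (t1 * a) * (t1 * b) := by rw [h, h']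
  _ = t1 * (t1 * (a * b)) := by ring
  _ = 0 := by rw [hab, mul_zero]
lemma dom2 {a b : R} (ha : t2 * a ≠ 0) (hb : t2 * b ≠ 0) : t2 * (a * b) ≠ 0 := by
  rcases L5 a with h|h; · exact absurd h ha
  rcases L5 b with h'|h'; · exact absurd h' hb
  intro hab
  apply t2_ne
  have e : t2 = (t2*a)^3*(t2*b)^3 := by rw [h, h', t2_sq]
  rw [e]
  calc (t2*a)^3*(t2*b)^3 = (t2*(a*b)) * (t2^5 * a^2*b^2) := by ring
  _ = 0 := by rw [hab, zero_mul]
lemma isUnit_of (a : R) (h1 : t1 * a ≠ 0) (h2 : t2 * a ≠ 0) : IsUnit a := by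
  rcases L4 a with h|h; · exact absurd h h1
  rcases L5 a with h'|h'; · exact absurd h' h2
  apply IsUnit.of_mul_eq_one (a := a) (t1 + t2^3 * a^2)
  calc a * (t1 + t2^3 * a^2) = t1 * a + (t2*a)^3 := by ring
  _ = t1 + t2 := by rw [h, h']
  _ = 1 := tsum
end SD

namespace SD
variable {n m : ℕ}
instance {m : ℕ} : NeZero (2 + m) := ⟨by omega⟩
lemma herm_def (u v : Fin n → R) : herm (ZMod 2) 3 u v = ∑ j, u j * conj (v j) := rfl
lemma herm_add_left (u v w : Fin n → R) :
    herm (ZMod 2) 3 (u + v) w = herm (ZMod 2) 3 u w + herm (ZMod 2) 3 v w := by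
  simp [herm_def, add_mul, Finset.sum_add_distrib]
lemma herm_sub_left (u v w : Fin n → R) :
    herm (ZMod 2) 3 (u - v) w = herm (ZMod 2) 3 u w - herm (ZMod 2) 3 v w := by
  simp [herm_def, sub_mul, Finset.sum_sub_distrib]
lemma herm_smul_left (c : R) (u w : Fin n → R) :
    herm (ZMod 2) 3 (c • u) w = c * herm (ZMod 2) 3 u w := by
  simp [herm_def, Finset.mul_sum, mul_assoc]
lemma herm_zero_left (w : Fin n → R) : herm (ZMod 2) 3 (0 : Fin n → R) w = 0 := by
  simp [herm_def]
lemma herm_sub_right (u v w : Fin n → R) :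
    herm (ZMod 2) 3 u (v - w) = herm (ZMod 2) 3 u v - herm (ZMod 2) 3 u w := by
  simp [herm_def, mul_sub, Finset.sum_sub_distrib]
lemma conj_herm (u v : Fin n → R) : conj (herm (ZMod 2) 3 u v) = herm (ZMod 2) 3 v u := by
  simp only [herm_def, map_sum, map_mul, conj_conj]
  exact Finset.sum_congr rfl (fun j _ => mul_comm _ _)
lemma herm_single (u : Fin n → R) (i : Fin n) (a : R) :
    herm (ZMod 2) 3 u (Pi.single i a) = u i * conj a := by
  rw [herm_def, Finset.sum_eq_single i]
  · rw [Pi.single_eq_same]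
  · intro j _ hj; rw [Pi.single_eq_of_ne hj, map_zero, mul_zero]
  · intro h; exact absurd (Finset.mem_univ i) h
lemma app0 (u : Fin 2 → R) (x : Fin m → R) : Fin.append u x (0 : Fin (2 + m)) = u 0 := by
  have h : (0 : Fin (2 + m)) = Fin.castAdd m (0 : Fin 2) := by ext; simp
  rw [h, Fin.append_left]
lemma app1 (u : Fin 2 → R) (x : Fin m → R) : Fin.append u x (1 : Fin (2 + m)) = u 1 := by
  have h : (1 : Fin (2 + m)) = Fin.castAdd m (1 : Fin 2) := by ext; simp [Fin.val_one]; first | exact Nat.mod_eq_of_lt (by omega) | exact (Nat.mod_eq_of_lt (by omega)).symm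
  rw [h, Fin.append_left]
lemma appT (u : Fin 2 → R) (x : Fin m → R) (i : Fin m) :
    Fin.append u x (Fin.natAdd 2 i) = x i := Fin.append_right _ _ _
lemma herm_append (u v : Fin 2 → R) (x z : Fin m → R) :
    herm (ZMod 2) 3 (Fin.append u x) (Fin.append v z)
      = (u 0 * conj (v 0) + u 1 * conj (v 1)) + herm (ZMod 2) 3 x z := by
  rw [herm_def, Fin.sum_univ_add]
  congr 1
  · simp only [Fin.append_left]
    exact Fin.sum_univ_two _
  · simp only [Fin.append_right]
    rfl
lemma vsplit (v : Fin (2 + m) → R) :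
    v = Fin.append ![v 0, v 1] (fun i => v (Fin.natAdd 2 i)) := by
  funext j
  induction j using Fin.addCases with
  | left i =>
    rw [Fin.append_left]
    have h2 : (i : Fin 2) = 0 ∨ i = 1 := by omega
    rcases h2 with rfl|rfl
    · rw [show Fin.castAdd m (0:Fin 2) = (0 : Fin (2+m)) by ext; simp]; rfl
    · rw [show Fin.castAdd m (1:Fin 2) = (1 : Fin (2+m)) by ext; simp [Fin.val_one]; first | exact Nat.mod_eq_of_lt (by omega) | exact (Nat.mod_eq_of_lt (by omega)).symm]; rfl
  | right i => rw [Fin.append_right]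
lemma append_add (u v : Fin 2 → R) (x z : Fin m → R) :
    Fin.append u x + Fin.append v z = Fin.append (u + v) (x + z) := by
  funext j
  induction j using Fin.addCases with
  | left i => simp [Fin.append_left]
  | right i => simp [Fin.append_right]
lemma append_smul (c : R) (u : Fin 2 → R) (x : Fin m → R) :
    c • Fin.append u x = Fin.append (c • u) (c • x) := by
  funext j
  induction j using Fin.addCases with
  | left i => simp [Fin.append_left]
  | right i => simp [Fin.append_right]
lemma append_zero : Fin.append (0 : Fin 2 → R) (0 : Fin m → R) = 0 := by
  funext j
  induction j using Fin.addCases with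
  | left i => simp [Fin.append_left]
  | right i => simp [Fin.append_right]
end SD

namespace SD
section Steps
variable {n : ℕ} (C : Submodule R (Fin n → R))

/-- orthogonality of any two codewords -/
lemma sd_orth (hC : IsHermSelfDual (ZMod 2) 3 C) {u w : Fin n → R} (hu : u ∈ C) (hw : w ∈ C) : herm (ZMod 2) 3 u w = 0 :=
  (hC w).mp hw u hu

lemma stepA (hC : IsHermSelfDual (ZMod 2) 3 C) (t : R) (hconj : conj t = t) (hidem : t * t = t) (htne : t ≠ 0)
    (i : Fin n) : ∃ v ∈ C, t * v i ≠ 0 := by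
  by_contra hcon
  push_neg at hcon
  have hmem : Pi.single i t ∈ C := by
    rw [hC]
    intro u hu
    rw [herm_single, hconj]
    have := hcon u hu
    calc u i * t = t * u i := mul_comm _ _
    _ = 0 := this
  have := hcon _ hmem
  rw [Pi.single_eq_same] at this
  exact htne (by rw [← hidem]; exact this)

/-- the key bilinear relation derived from "all pairs bad" -/
lemma R1 (t : R) (hidem : t * t = t)
    (hAB : ∀ i j : Fin n, ∀ z ∈ C, t * z j = 0 → t * z i = 0)
    {u v : Fin n → R} (hu : u ∈ C) (hv : v ∈ C) (p i : Fin n) :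
    t * (u p * v i) = t * (v p * u i) := by
  set z : Fin n → R := (t * u p) • v - (t * v p) • u with hzdef
  have hz : z ∈ C := Submodule.sub_mem _ (Submodule.smul_mem _ _ hv) (Submodule.smul_mem _ _ hu)
  have hzp : t * z p = 0 := by
    simp only [hzdef, Pi.sub_apply, Pi.smul_apply, smul_eq_mul]
    ring
  have hzi := hAB i p z hz hzp
  simp only [hzdef, Pi.sub_apply, Pi.smul_apply, smul_eq_mul] at hzi
  linear_combination hzi - (u p * v i - v p * u i) * hidem

lemma bad_symm (hC : IsHermSelfDual (ZMod 2) 3 C) (t : R) (hconj : conj t = t) (hidem : t * t = t) (htne : t ≠ 0)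
    (hdom : ∀ {a b : R}, t * a ≠ 0 → t * b ≠ 0 → t * (a * b) ≠ 0)
    {i j : Fin n} (hBad : ∀ z ∈ C, t * z j = 0 → t * z i = 0) :
    ∀ z ∈ C, t * z i = 0 → t * z j = 0 := by
  intro z hz hzi
  by_contra hzj
  obtain ⟨u, hu, hui⟩ := stepA C hC t hconj hidem htne i
  set w : Fin n → R := (t * u j) • z - (t * z j) • u with hwdef
  have hw : w ∈ C := Submodule.sub_mem _ (Submodule.smul_mem _ _ hz) (Submodule.smul_mem _ _ hu)
  have hwj : t * w j = 0 := by
    simp only [hwdef, Pi.sub_apply, Pi.smul_apply, smul_eq_mul]; ring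
  have hwi := hBad w hw hwj
  simp only [hwdef, Pi.sub_apply, Pi.smul_apply, smul_eq_mul] at hwi
  have hne := hdom hzj hui
  apply hne
  linear_combination -hwi + (u j * z i) * hidem + u j * hzi - (z j * u i) * hidem

lemma stepC (hC : IsHermSelfDual (ZMod 2) 3 C) (t : R) (hconj : conj t = t) (hidem : t * t = t) (htne : t ≠ 0)
    (hdom : ∀ {a b : R}, t * a ≠ 0 → t * b ≠ 0 → t * (a * b) ≠ 0)
    (i0 i1 i2 : Fin n) (h01 : i0 ≠ i1) (h02 : i0 ≠ i2) (h12 : i1 ≠ i2) :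
    ¬ (∀ i j : Fin n, ∀ z ∈ C, t * z j = 0 → t * z i = 0) := by
  intro hAB
  obtain ⟨v, hv, hv0⟩ := stepA C hC t hconj hidem htne i0
  have hall : ∀ i, t * v i ≠ 0 := by
    intro i
    obtain ⟨u, hu, hui⟩ := stepA C hC t hconj hidem htne i
    have hr := R1 C t hidem hAB hu hv i i0
    have hne := hdom hui hv0
    rw [hr] at hne
    intro h0
    exact hne (by rw [show v i * u i0 = (v i) * u i0 from rfl, ← mul_assoc, h0, zero_mul])
  set g : Fin n → R := Pi.single i0 (conj (t * v i1)) - Pi.single i1 (conj (t * v i0)) with hgdef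
  have hg : g ∈ C := by
    rw [hC]
    intro u hu
    rw [hgdef, herm_sub_right, herm_single, herm_single, conj_conj, conj_conj]
    have hr := R1 C t hidem hAB hu hv i0 i1
    linear_combination hr
  have hr2 := R1 C t hidem hAB hg hv i0 i2
  have hgi2 : g i2 = 0 := by
    rw [hgdef]
    simp [Pi.single_eq_of_ne (Ne.symm h02), Pi.single_eq_of_ne (Ne.symm h12)]
  have hgi0 : g i0 = conj (t * v i1) := by
    rw [hgdef]
    simp [Pi.single_eq_of_ne h01]
  rw [hgi2, hgi0] at hr2
  have hne : t * (conj (v i1) * v i2) ≠ 0 := by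
    apply hdom _ (hall i2)
    rw [show t * conj (v i1) = conj (t * v i1) by rw [map_mul, hconj]]
    intro h
    exact hall i1 (by
      have := congrArg conj h
      rw [conj_conj, map_zero] at this
      exact this)
  apply hne
  rw [map_mul, hconj] at hr2
  linear_combination hr2 - (conj (v i1) * v i2) * hidem
end Steps

/-- two equivalence relations can't cover all pairs unless one is total -/
lemma rel_combine {I : Type} (B1 B2 : I → I → Prop)
    (s1 : ∀ {i j}, B1 i j → B1 j i) (tr1 : ∀ {i j k}, B1 i j → B1 j k → B1 i k)
    (s2 : ∀ {i j}, B2 i j → B2 j i) (tr2 : ∀ {i j k}, B2 i j → B2 j k → B2 i k)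
    (h1 : ∃ a b, ¬B1 a b) (h2 : ∃ c d, ¬B2 c d)
    (hall : ∀ i j, B1 i j ∨ B2 i j) : False := by
  obtain ⟨a, b, hab⟩ := h1
  obtain ⟨c, d, hcd⟩ := h2
  have hab2 : B2 a b := (hall a b).resolve_left hab
  have hcd1 : B1 c d := (hall c d).resolve_right hcd
  have ha : B1 a c ∨ B1 a d := by
    by_cases h : B2 a c
    · right
      rcases hall a d with h'|h'
      · exact h'
      · exact absurd (tr2 (s2 h) h') hcd
    · exact Or.inl ((hall a c).resolve_right h)
  have hb : B1 b c ∨ B1 b d := by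
    by_cases h : B2 b c
    · right
      rcases hall b d with h'|h'
      · exact h'
      · exact absurd (tr2 (s2 h) h') hcd
    · exact Or.inl ((hall b c).resolve_right h)
  apply hab
  rcases ha with h|h <;> rcases hb with h'|h'
  · exact tr1 h (s1 h')
  · exact tr1 (tr1 h hcd1) (s1 h')
  · exact tr1 (tr1 h (s1 hcd1)) (s1 h')
  · exact tr1 h (s1 h')

lemma tmul2 : t2 * t1 = 0 := by rw [mul_comm]; exact tmul

/-- existence of a codeword with a unit coordinate and a zero coordinate -/
lemma exU {n : ℕ} (C : Submodule R (Fin n → R)) (hC : IsHermSelfDual (ZMod 2) 3 C)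
    (i0 i1 i2 : Fin n) (h01 : i0 ≠ i1) (h02 : i0 ≠ i2) (h12 : i1 ≠ i2) :
    ∃ (i j : Fin n) (z : Fin n → R), z ∈ C ∧ IsUnit (z i) ∧ z j = 0 ∧ i ≠ j := by
  classical
  set B1 : Fin n → Fin n → Prop := fun i j => ∀ z ∈ C, t1 * z j = 0 → t1 * z i = 0 with hB1
  set B2 : Fin n → Fin n → Prop := fun i j => ∀ z ∈ C, t2 * z j = 0 → t2 * z i = 0 with hB2
  have hd1 : ∀ {a b : R}, t1 * a ≠ 0 → t1 * b ≠ 0 → t1 * (a * b) ≠ 0 := fun ha hb => dom1 ha hb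
  have hd2 : ∀ {a b : R}, t2 * a ≠ 0 → t2 * b ≠ 0 → t2 * (a * b) ≠ 0 := fun ha hb => dom2 ha hb
  have hex : ∃ i j, ¬ B1 i j ∧ ¬ B2 i j := by
    by_contra hcon
    push_neg at hcon
    refine rel_combine B1 B2 ?_ ?_ ?_ ?_ ?_ ?_ ?_
    · exact fun {i j} h => bad_symm C hC t1 conj_t1 t1_sq t1_ne hd1 h
    · exact fun {i j k} hij hjk z hz h => hij z hz (hjk z hz h)
    · exact fun {i j} h => bad_symm C hC t2 conj_t2 t2_sq t2_ne hd2 h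
    · exact fun {i j k} hij hjk z hz h => hij z hz (hjk z hz h)
    · have := stepC C hC t1 conj_t1 t1_sq t1_ne hd1 i0 i1 i2 h01 h02 h12
      by_contra hno
      push_neg at hno
      exact this (fun i j => hno i j)
    · have := stepC C hC t2 conj_t2 t2_sq t2_ne hd2 i0 i1 i2 h01 h02 h12
      by_contra hno
      push_neg at hno
      exact this (fun i j => hno i j)
    · intro i j
      rcases em (B1 i j) with h|h
      · exact Or.inl h
      · exact Or.inr (hcon i j h)
  obtain ⟨i, j, hg1, hg2⟩ := hex
  simp only [hB1, hB2] at hg1 hg2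
  push_neg at hg1 hg2
  obtain ⟨z1, hz1, hz1j, hz1i⟩ := hg1
  obtain ⟨z2, hz2, hz2j, hz2i⟩ := hg2
  set z : Fin n → R := t1 • z1 + t2 • z2 with hzdef
  have hz : z ∈ C := Submodule.add_mem _ (Submodule.smul_mem _ _ hz1) (Submodule.smul_mem _ _ hz2)
  have hzj : z j = 0 := by
    simp only [hzdef, Pi.add_apply, Pi.smul_apply, smul_eq_mul]
    rw [hz1j, hz2j, add_zero]
  have hu1 : t1 * z i ≠ 0 := by
    simp only [hzdef, Pi.add_apply, Pi.smul_apply, smul_eq_mul]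
    intro h
    apply hz1i
    linear_combination h - (z1 i) * t1_sq - (z2 i) * tmul
  have hu2 : t2 * z i ≠ 0 := by
    simp only [hzdef, Pi.add_apply, Pi.smul_apply, smul_eq_mul]
    intro h
    apply hz2i
    linear_combination h - (z2 i) * t2_sq - (z1 i) * tmul2
  refine ⟨i, j, z, hz, isUnit_of _ hu1 hu2, hzj, ?_⟩
  intro he
  rw [he, hzj, mul_zero] at hu1
  exact hu1 rfl
end SD

namespace SD
section Build
variable {m : ℕ}

abbrev Tl (m : ℕ) : (Fin (2+m) → R) →ₗ[R] (Fin m → R) := LinearMap.funLeft R R (Fin.natAdd 2)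

lemma Tl_apply (v : Fin (2+m) → R) (i : Fin m) : Tl m v i = v (Fin.natAdd 2 i) := rfl

lemma herm_appr (v : Fin (2+m) → R) (u : Fin 2 → R) (z : Fin m → R) :
    herm (ZMod 2) 3 v (Fin.append u z)
      = v 0 * conj (u 0) + v 1 * conj (u 1) + herm (ZMod 2) 3 (Tl m v) z := by
  conv_lhs => rw [vsplit v, herm_append]
  simp only [Matrix.cons_val_zero, Matrix.cons_val_one, Matrix.head_cons]
  rfl

lemma herm_appl (u : Fin 2 → R) (z : Fin m → R) (v : Fin (2+m) → R) :
    herm (ZMod 2) 3 (Fin.append u z) v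
      = u 0 * conj (v 0) + u 1 * conj (v 1) + herm (ZMod 2) 3 z (Tl m v) := by
  conv_lhs => rw [vsplit v, herm_append]
  simp only [Matrix.cons_val_zero, Matrix.cons_val_one, Matrix.head_cons]
  rfl

lemma build (C' : Submodule R (Fin (2+m) → R)) (hC' : IsHermSelfDual (ZMod 2) 3 C')
    (x : Fin m → R) (he : Fin.append ![1,0] x ∈ C') :
    ∃ (k : ℕ) (r : Fin k → (Fin m → R)),
      IsHermSelfDual (ZMod 2) 3 (Submodule.span R (Set.range r)) ∧
      herm (ZMod 2) 3 x x = -1 ∧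
      C' = Submodule.span R
        (({Fin.append ![1, 0] x} : Set (Fin (2+m) → R)) ∪
          Set.range fun i =>
            Fin.append ![- herm (ZMod 2) 3 (r i) x,
              (1:R) * (- herm (ZMod 2) 3 (r i) x)] (r i)) := by
  classical
  set e : Fin (2+m) → R := Fin.append ![1,0] x with hedef
  have he0 : e 0 = 1 := by rw [hedef, app0]; rfl
  have he1 : e 1 = 0 := by rw [hedef, app1]; rfl
  -- the subcode with equal first two coordinates, and its tail projection C0
  set D : Submodule R (Fin (2+m) → R) :=
    C' ⊓ LinearMap.ker ((LinearMap.proj 0 : (Fin (2+m) → R) →ₗ[R] R) - LinearMap.proj 1)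
    with hDdef
  have hDmem : ∀ v : Fin (2+m) → R, v ∈ D ↔ v ∈ C' ∧ v 0 = v 1 := by
    intro v
    rw [hDdef, Submodule.mem_inf, LinearMap.mem_ker, LinearMap.sub_apply,
      LinearMap.proj_apply, LinearMap.proj_apply, sub_eq_zero]
  set C0 : Submodule R (Fin m → R) := Submodule.map (Tl m) D with hC0def
  -- ⟨x,x⟩ = -1
  have hermx : herm (ZMod 2) 3 x x = -1 := by
    have h0 := sd_orth C' hC' he he
    rw [hedef, herm_append] at h0
    simp only [Matrix.cons_val_zero, Matrix.cons_val_one, Matrix.head_cons,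
      map_one, map_zero, mul_one, mul_zero, add_zero, zero_mul] at h0
    linear_combination h0
  -- first coordinate of any codeword is determined by its tail
  have hv0 : ∀ v ∈ C', v 0 = - herm (ZMod 2) 3 (Tl m v) x := by
    intro v hv
    have h := sd_orth C' hC' hv he
    rw [hedef, herm_appr] at h
    simp only [Matrix.cons_val_zero, Matrix.cons_val_one, Matrix.head_cons,
      map_one, map_zero, mul_one, mul_zero, add_zero] at h
    linear_combination h
  -- the inner product of two words of D is the inner product of their tails
  have hDD : ∀ u w : Fin (2+m) → R, u 0 = u 1 → w 0 = w 1 →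
      herm (ZMod 2) 3 u w = herm (ZMod 2) 3 (Tl m u) (Tl m w) := by
    intro u w hu hw
    conv_lhs => rw [vsplit w]
    rw [herm_appr]
    simp only [Matrix.cons_val_zero, Matrix.cons_val_one, Matrix.head_cons]
    rw [← hu, ← hw, show (fun i => w (Fin.natAdd 2 i)) = Tl m w from rfl]
    rw [char2 (u 0 * conj (w 0)), zero_add]
  -- the lifting of a vector orthogonal to C0
  have liftw : ∀ w : Fin m → R, (∀ u ∈ C0, herm (ZMod 2) 3 u w = 0) →
      Fin.append ![- herm (ZMod 2) 3 w x, - herm (ZMod 2) 3 w x] w ∈ D := by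
    intro w hw
    set a : R := - herm (ZMod 2) 3 w x with ha
    set wt : Fin (2+m) → R := Fin.append ![a, a] w with hwt
    have hwt0 : wt 0 = a := by rw [hwt, app0]; rfl
    have hwt1 : wt 1 = a := by rw [hwt, app1]; rfl
    have hwtC : wt ∈ C' := by
      rw [hC']
      intro v hv
      -- decompose v = t • e + d with d ∈ D
      set d : Fin (2+m) → R := v - (v 0 - v 1) • e with hddef
      have hdC : d ∈ C' := Submodule.sub_mem _ hv (Submodule.smul_mem _ _ he)
      have hd01 : d 0 = d 1 := by
        simp only [hddef, Pi.sub_apply, Pi.smul_apply, smul_eq_mul, he0, he1]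
        ring
      have hvd : v = (v 0 - v 1) • e + d := by rw [hddef]; abel
      rw [hvd, herm_add_left, herm_smul_left]
      have h1 : herm (ZMod 2) 3 e wt = 0 := by
        rw [hedef, hwt, herm_append]
        simp only [Matrix.cons_val_zero, Matrix.cons_val_one, Matrix.head_cons,
          one_mul, zero_mul, add_zero]
        rw [ha, map_neg, conj_herm]
        ring
      have h2 : herm (ZMod 2) 3 d wt = 0 := by
        rw [hDD d wt hd01 (by rw [hwt0, hwt1])]
        have htw : Tl m wt = w := by
          funext i
          rw [Tl_apply, hwt, appT]
        rw [htw]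
        exact hw (Tl m d) ⟨d, (hDmem d).mpr ⟨hdC, hd01⟩, rfl⟩
      rw [h1, h2, mul_zero, add_zero]
    rw [hDmem]
    exact ⟨hwtC, by rw [hwt0, hwt1]⟩
  -- C0 is self-dual
  have hC0sd : IsHermSelfDual (ZMod 2) 3 C0 := by
    intro w
    constructor
    · rintro ⟨wt, hwtD, rfl⟩ u ⟨ut, hutD, rfl⟩
      rw [← hDD ut wt ((hDmem ut).mp hutD).2 ((hDmem wt).mp hwtD).2]
      exact sd_orth C' hC' ((hDmem ut).mp hutD).1 ((hDmem wt).mp hwtD).1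
    · intro hw
      have := liftw w hw
      refine ⟨_, this, ?_⟩
      funext i
      rw [Tl_apply, appT]
  -- pick a finite generating family of C0
  obtain ⟨s, hs⟩ : C0.FG := IsNoetherian.noetherian C0
  set r : Fin s.card → (Fin m → R) := fun i => ((s.equivFin.symm i : (Fin m → R))) with hrdef
  have hrange : Set.range r = (s : Set (Fin m → R)) := by
    ext v
    constructor
    · rintro ⟨i, rfl⟩
      exact (s.equivFin.symm i).2
    · intro hv
      exact ⟨s.equivFin ⟨v, hv⟩, by simp [hrdef]⟩
  have hspan : Submodule.span R (Set.range r) = C0 := by rw [hrange]; exact hs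
  have hrC0 : ∀ i, r i ∈ C0 := by
    intro i
    rw [← hspan]
    exact Submodule.subset_span (Set.mem_range_self i)
  refine ⟨s.card, r, by rw [hspan]; exact hC0sd, hermx, ?_⟩
  -- the generating set
  set S : Set (Fin (2+m) → R) :=
    ({Fin.append ![1, 0] x} : Set (Fin (2+m) → R)) ∪
      Set.range fun i =>
        Fin.append ![- herm (ZMod 2) 3 (r i) x,
          (1:R) * (- herm (ZMod 2) 3 (r i) x)] (r i) with hSdef
  have hgen1 : ∀ i, (![- herm (ZMod 2) 3 (r i) x, (1:R) * (- herm (ZMod 2) 3 (r i) x)] : Fin 2 → R)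
      = ![- herm (ZMod 2) 3 (r i) x, - herm (ZMod 2) 3 (r i) x] := by
    intro i; rw [one_mul]
  apply le_antisymm
  · -- C' ≤ span S
    intro v hv
    set d : Fin (2+m) → R := v - (v 0 - v 1) • e with hddef
    have hdC : d ∈ C' := Submodule.sub_mem _ hv (Submodule.smul_mem _ _ he)
    have hd01 : d 0 = d 1 := by
      simp only [hddef, Pi.sub_apply, Pi.smul_apply, smul_eq_mul, he0, he1]
      ring
    have hvd : v = (v 0 - v 1) • e + d := by rw [hddef]; abel
    have hkey : ∀ w ∈ C0, Fin.append ![- herm (ZMod 2) 3 w x, - herm (ZMod 2) 3 w x] w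
        ∈ Submodule.span R S := by
      intro w hwC0
      rw [← hspan] at hwC0
      induction hwC0 using Submodule.span_induction with
      | mem w hwmem =>
        obtain ⟨i, rfl⟩ := hwmem
        apply Submodule.subset_span
        rw [hSdef]
        right
        exact ⟨i, by simp only [one_mul]⟩
      | zero =>
        rw [show herm (ZMod 2) 3 (0 : Fin m → R) x = 0 from herm_zero_left x, neg_zero]
        rw [show (![(0:R), 0] : Fin 2 → R) = 0 from by funext j; fin_cases j <;> rfl]
        rw [append_zero]
        exact Submodule.zero_mem _
      | add w1 w2 _ _ hP1 hP2 =>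
        have hvec : (![- herm (ZMod 2) 3 (w1 + w2) x, - herm (ZMod 2) 3 (w1 + w2) x] : Fin 2 → R)
            = ![- herm (ZMod 2) 3 w1 x, - herm (ZMod 2) 3 w1 x]
              + ![- herm (ZMod 2) 3 w2 x, - herm (ZMod 2) 3 w2 x] := by
          funext j
          fin_cases j <;> simp [herm_add_left] <;> ring
        rw [hvec, ← append_add]
        exact Submodule.add_mem _ hP1 hP2
      | smul c w1 _ hP =>
        have hvec : (![- herm (ZMod 2) 3 (c • w1) x, - herm (ZMod 2) 3 (c • w1) x] : Fin 2 → R)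
            = c • ![- herm (ZMod 2) 3 w1 x, - herm (ZMod 2) 3 w1 x] := by
          funext j
          fin_cases j <;> simp [herm_smul_left] <;> ring
        rw [hvec, ← append_smul]
        exact Submodule.smul_mem _ _ hP
    have hdmem : d ∈ Submodule.span R S := by
      have hd0 : d 0 = - herm (ZMod 2) 3 (Tl m d) x := hv0 d hdC
      have hdsplit : d = Fin.append ![- herm (ZMod 2) 3 (Tl m d) x, - herm (ZMod 2) 3 (Tl m d) x]
          (Tl m d) := by
        funext j
        induction j using Fin.addCases with
        | left i =>
          rw [Fin.append_left]
          have h2 : (i : Fin 2) = 0 ∨ i = 1 := by omega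
          rcases h2 with rfl|rfl
          · rw [show Fin.castAdd m (0:Fin 2) = (0 : Fin (2+m)) from by ext; simp]
            exact hd0
          · rw [show Fin.castAdd m (1:Fin 2) = (1 : Fin (2+m)) from by
              ext; simp [Fin.val_one]; exact (Nat.mod_eq_of_lt (by omega)).symm]
            show d 1 = _
            rw [← hd01]
            exact hd0
        | right i =>
          rw [Fin.append_right]
          rfl
      rw [hdsplit]
      exact hkey (Tl m d) ⟨d, (hDmem d).mpr ⟨hdC, hd01⟩, rfl⟩
    rw [hvd]
    refine Submodule.add_mem _ (Submodule.smul_mem _ _ ?_) hdmem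
    exact Submodule.subset_span (by rw [hSdef]; left; rfl)
  · -- span S ≤ C'
    rw [Submodule.span_le]
    rintro v (rfl | ⟨i, rfl⟩)
    · exact he
    · simp only [one_mul]
      have := liftw (r i) (fun u hu => (hC0sd (r i)).mp (hrC0 i) u hu)
      exact ((hDmem _).mp this).1
end Build
end SD

namespace SD
lemma herm_perm {n : ℕ} (σ : Equiv.Perm (Fin n)) (u v : Fin n → R) :
    herm (ZMod 2) 3 (u ∘ σ) (v ∘ σ) = herm (ZMod 2) 3 u v := by
  rw [herm_def, herm_def]
  exact Equiv.sum_comp σ (fun p => u p * conj (v p))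

lemma funLeft_perm_apply {n : ℕ} (σ : Equiv.Perm (Fin n)) (u : Fin n → R) :
    LinearMap.funLeft R R σ u = u ∘ σ := rfl

lemma sd_perm {n : ℕ} (C : Submodule R (Fin n → R)) (hC : IsHermSelfDual (ZMod 2) 3 C)
    (σ : Equiv.Perm (Fin n)) :
    IsHermSelfDual (ZMod 2) 3 (Submodule.map (LinearMap.funLeft R R σ) C) := by
  intro v
  constructor
  · rintro ⟨u, hu, rfl⟩ w ⟨u', hu', rfl⟩
    rw [funLeft_perm_apply, funLeft_perm_apply, herm_perm]
    exact sd_orth C hC hu' hu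
  · intro hv
    refine ⟨v ∘ ⇑σ⁻¹, ?_, ?_⟩
    · show v ∘ ⇑σ⁻¹ ∈ C
      rw [hC]
      intro u hu
      have h1 : herm (ZMod 2) 3 u (v ∘ ⇑σ⁻¹) = herm (ZMod 2) 3 (u ∘ σ) v := by
        rw [← herm_perm σ u (v ∘ ⇑σ⁻¹)]
        congr 1
        funext j
        simp only [Function.comp_apply, Equiv.Perm.inv_def, Equiv.symm_apply_apply]
      rw [h1]
      exact hv (u ∘ σ) ⟨u, hu, rfl⟩
    · rw [funLeft_perm_apply]
      funext j
      simp only [LinearMap.funLeft_apply, Function.comp_apply, Equiv.Perm.inv_def, Equiv.symm_apply_apply, Equiv.apply_symm_apply]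
end SD


/-- Every Hermitian self-dual code over `R = F_2[Y]/(Y^3 − 1)` of length `2ℓ+2` is
obtained, up to a permutation of coordinates, by the building-up construction. -/
theorem statement10 (ℓ : ℕ) (hℓ : 1 ≤ ℓ)
    (C : Submodule (Rq (ZMod 2) 3) (Fin (2 + 2 * ℓ) → Rq (ZMod 2) 3))
    (hC : IsHermSelfDual (ZMod 2) 3 C) :
    ∃ (σ : Equiv.Perm (Fin (2 + 2 * ℓ))) (k : ℕ)
      (r : Fin k → (Fin (2 * ℓ) → Rq (ZMod 2) 3)) (c : Rq (ZMod 2) 3)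
      (x : Fin (2 * ℓ) → Rq (ZMod 2) 3),
      IsHermSelfDual (ZMod 2) 3 (Submodule.span (Rq (ZMod 2) 3) (Set.range r)) ∧
      c * conjR (ZMod 2) 3 c = -1 ∧ herm (ZMod 2) 3 x x = -1 ∧
      Submodule.map (LinearMap.funLeft (Rq (ZMod 2) 3) (Rq (ZMod 2) 3) σ) C =
        Submodule.span (Rq (ZMod 2) 3)
          (({Fin.append ![1, 0] x} : Set (Fin (2 + 2 * ℓ) → Rq (ZMod 2) 3)) ∪
            Set.range fun i =>
              Fin.append ![- herm (ZMod 2) 3 (r i) x,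
                c * (- herm (ZMod 2) 3 (r i) x)] (r i)) := by
  classical
  obtain ⟨i, j, z, hz, hunit, hzj, hij⟩ :=
    SD.exU C hC ⟨0, by omega⟩ ⟨1, by omega⟩ ⟨2, by omega⟩
      (by simp) (by simp) (by simp)
  obtain ⟨uu, huu⟩ := hunit
  set z' : Fin (2 + 2 * ℓ) → SD.R := ((uu⁻¹ : SD.Rˣ) : SD.R) • z with hz'def
  have hz'C : z' ∈ C := Submodule.smul_mem _ _ hz
  have hz'i : z' i = 1 := by
    rw [hz'def]
    simp only [Pi.smul_apply, smul_eq_mul]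
    rw [← huu, Units.inv_mul]
  have hz'j : z' j = 0 := by
    rw [hz'def]
    simp only [Pi.smul_apply, smul_eq_mul]
    rw [hzj, mul_zero]
  -- build the permutation sending 0 ↦ i, 1 ↦ j
  set i0 : Fin (2 + 2 * ℓ) := ⟨0, by omega⟩ with hi0
  set i1 : Fin (2 + 2 * ℓ) := ⟨1, by omega⟩ with hi1
  have h01 : i0 ≠ i1 := by simp [hi0, hi1]
  set τ1 : Equiv.Perm (Fin (2 + 2 * ℓ)) := Equiv.swap i0 i with hτ1
  set j' : Fin (2 + 2 * ℓ) := τ1.symm j with hj'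
  have hj'0 : j' ≠ i0 := by
    intro h
    apply hij
    have := congrArg τ1 h
    rw [hj', Equiv.apply_symm_apply, hτ1, Equiv.swap_apply_left] at this
    exact this.symm
  set τ2 : Equiv.Perm (Fin (2 + 2 * ℓ)) := Equiv.swap i1 j' with hτ2
  set σ : Equiv.Perm (Fin (2 + 2 * ℓ)) := τ2.trans τ1 with hσ
  have hσ0 : σ i0 = i := by
    rw [hσ]
    simp only [Equiv.trans_apply]
    rw [hτ2, Equiv.swap_apply_of_ne_of_ne h01 hj'0.symm ..]
    · rw [hτ1, Equiv.swap_apply_left]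
  have hσ1 : σ i1 = j := by
    rw [hσ]
    simp only [Equiv.trans_apply]
    rw [hτ2, Equiv.swap_apply_left, hj', Equiv.apply_symm_apply]
  -- the permuted code contains (1, 0, x)
  set v' : Fin (2 + 2 * ℓ) → SD.R := z' ∘ σ with hv'
  set x : Fin (2 * ℓ) → SD.R := fun q => v' (Fin.natAdd 2 q) with hx
  have hv'0 : v' i0 = 1 := by rw [hv', Function.comp_apply, hσ0]; exact hz'i
  have hv'1 : v' i1 = 0 := by rw [hv', Function.comp_apply, hσ1]; exact hz'j
  have happ : Fin.append ![(1 : SD.R), 0] x = v' := by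
    funext q
    induction q using Fin.addCases with
    | left p =>
      rw [Fin.append_left]
      have h2 : ∀ q : Fin 2, q = 0 ∨ q = 1 := by decide
      rcases h2 p with rfl|rfl
      · rw [show Fin.castAdd (2*ℓ) (0 : Fin 2) = i0 from by rw [hi0]; ext; simp]
        rw [hv'0]; rfl
      · rw [show Fin.castAdd (2*ℓ) (1 : Fin 2) = i1 from by
          rw [hi1]; ext; simp [Fin.val_one]]
        rw [hv'1]; rfl
    | right p =>
      rw [Fin.append_right, hx]
  set C' : Submodule SD.R (Fin (2 + 2 * ℓ) → SD.R) :=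
    Submodule.map (LinearMap.funLeft SD.R SD.R σ) C with hC'def
  have hC'sd : IsHermSelfDual (ZMod 2) 3 C' := SD.sd_perm C hC σ
  have heC' : Fin.append ![(1 : SD.R), 0] x ∈ C' := by
    rw [happ, hC'def]
    exact ⟨z', hz'C, rfl⟩
  obtain ⟨k, r, hr1, hr2, hr3⟩ := SD.build (m := 2 * ℓ) C' hC'sd x heC'
  refine ⟨σ, k, r, 1, x, hr1, ?_, hr2, ?_⟩
  · rw [map_one, mul_one]
    exact (SD.neg_eq 1).symm
  · rw [← hC'def]
    exact hr3
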